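/- Commutativity of recursively lifted observables. Let A_f and A_g be unital complex algebras and Φ_A : A_f ⊗ A_g → A_f a unital algebra homomorphism. Define maps M_n : A_g → A_f recursively by M_1(x) := Φ_A(1 ⊗ x) and M_{n+1}(x) := Φ_A(M_n(x) ⊗ 1). Then for all m ≠ n and all x, y ∈ A_g, the elements M_m(x) and M_n(y) commute: M_m(x) M_n(y) = M_n(y) M_m(x). -/
import Mathlib


open TensorProduct

/-- The recursively lifted observable maps: `liftedObs Φ 0 x = Φ (1 ⊗ x)` (this is `M_1` in the
paper, i.e. we index from `0`), and `liftedObs Φ (n+1) x = Φ (liftedObs Φ n x ⊗ 1)`. -/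
noncomputable def liftedObs {Af Ag : Type*} [Ring Af] [Ring Ag] [Algebra ℂ Af] [Algebra ℂ Ag]
    (Φ : Af ⊗[ℂ] Ag →ₐ[ℂ] Af) : ℕ → Ag → Af
  | 0, x => Φ ((1 : Af) ⊗ₜ[ℂ] x)
  | n + 1, x => Φ (liftedObs Φ n x ⊗ₜ[ℂ] (1 : Ag))

lemma liftedObs_commute_lt {Af Ag : Type*} [Ring Af] [Ring Ag] [Algebra ℂ Af] [Algebra ℂ Ag]
    (Φ : Af ⊗[ℂ] Ag →ₐ[ℂ] Af) :
    ∀ m n : ℕ, m < n → ∀ x y : Ag,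
      liftedObs Φ m x * liftedObs Φ n y = liftedObs Φ n y * liftedObs Φ m x := by
  intro m
  induction m with
  | zero =>
    intro n hn x y
    obtain ⟨n', rfl⟩ : ∃ n', n = n' + 1 := ⟨n - 1, by omega⟩
    show Φ (1 ⊗ₜ[ℂ] x) * Φ (liftedObs Φ n' y ⊗ₜ[ℂ] 1)
        = Φ (liftedObs Φ n' y ⊗ₜ[ℂ] 1) * Φ (1 ⊗ₜ[ℂ] x)
    rw [← map_mul, ← map_mul, Algebra.TensorProduct.tmul_mul_tmul,
      Algebra.TensorProduct.tmul_mul_tmul, one_mul, mul_one, one_mul, mul_one]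
  | succ m ih =>
    intro n hn x y
    obtain ⟨n', rfl⟩ : ∃ n', n = n' + 1 := ⟨n - 1, by omega⟩
    show Φ (liftedObs Φ m x ⊗ₜ[ℂ] 1) * Φ (liftedObs Φ n' y ⊗ₜ[ℂ] 1)
        = Φ (liftedObs Φ n' y ⊗ₜ[ℂ] 1) * Φ (liftedObs Φ m x ⊗ₜ[ℂ] 1)
    rw [← map_mul, ← map_mul, Algebra.TensorProduct.tmul_mul_tmul,
      Algebra.TensorProduct.tmul_mul_tmul, one_mul, ih n' (by omega) x y]

/-- **Commutativity of recursively lifted observables.**  If `Φ_A : A_f ⊗ A_g → A_f` is a unital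
algebra homomorphism and `M_n : A_g → A_f` are defined recursively by `M_1 x = Φ_A (1 ⊗ x)` and
`M_{n+1} x = Φ_A (M_n x ⊗ 1)`, then for `m ≠ n` the elements `M_m x` and `M_n y` commute. -/
theorem liftedObs_commute {Af Ag : Type*} [Ring Af] [Ring Ag] [Algebra ℂ Af] [Algebra ℂ Ag]
    (Φ : Af ⊗[ℂ] Ag →ₐ[ℂ] Af) :
    ∀ m n : ℕ, m ≠ n → ∀ x y : Ag,
      liftedObs Φ m x * liftedObs Φ n y = liftedObs Φ n y * liftedObs Φ m x := by
  intro m n hmn x y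
  rcases lt_or_gt_of_ne hmn with h | h
  · exact liftedObs_commute_lt Φ m n h x y
  · exact (liftedObs_commute_lt Φ n m h y x).symm
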